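/- arXiv:0808.0418 — 2 statements merged into one kernel-verified Lean document; each statement's English description precedes it below -/
import Mathlib

section
/- If a₁ ≠ a₂ are nonzero integers with (n-1)^{n-1}(a₁^n − a₂^n) = n^n(b₂^{n-1} − b₁^{n-1}) and this common value m is nonzero, then the number of integer pairs (b₁, b₂) satisfying this is at most the number of divisors of m raised to a bounded power, in particular O_ε(|m|^ε). -/
lemma tau_le_rpow (ε : ℝ) (hε : 0 < ε) : ∃ C : ℝ, 0 < C ∧ ∀ N : ℕ, N ≠ 0 →
    (N.divisors.card : ℝ) ≤ C * (N : ℝ) ^ ε := by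
  set c : ℝ := ε * Real.log 2 with hc
  have hc0 : 0 < c := mul_pos hε (Real.log_pos one_lt_two)
  set B : ℝ := max 1 (Real.exp c / c) with hB
  have hB1 : 1 ≤ B := le_max_left _ _
  set P : ℕ := ⌈(2:ℝ) ^ (1/ε)⌉₊ with hP
  refine ⟨B ^ P, pow_pos (lt_of_lt_of_le one_pos hB1) _, fun N hN => ?_⟩
  classical
  -- τ(N)
  have hτ : (N.divisors.card : ℝ) =
      ∏ p ∈ N.primeFactors, ((N.factorization p : ℝ) + 1) := by
    rw [Nat.card_divisors hN]
    push_cast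
    rfl
  -- N as product
  have hNprod : (N : ℝ) = ∏ p ∈ N.primeFactors, ((p : ℝ)) ^ (N.factorization p : ℕ) := by
    conv_lhs => rw [← Nat.factorization_prod_pow_eq_self hN]
    rw [Nat.prod_factorization_eq_prod_primeFactors]
    push_cast
    rfl
  have hNε : (N : ℝ) ^ ε = ∏ p ∈ N.primeFactors, (p : ℝ) ^ ((N.factorization p : ℝ) * ε) := by
    rw [hNprod, ← Real.finset_prod_rpow _ _ (fun p _ => by positivity)]
    refine Finset.prod_congr rfl fun p hp => ?_
    rw [← Real.rpow_natCast (p:ℝ) (N.factorization p), ← Real.rpow_mul (by positivity)]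
  -- termwise bound
  have key : ∀ p ∈ N.primeFactors, ((N.factorization p : ℝ) + 1) ≤
      (if (p:ℝ) < (2:ℝ) ^ (1/ε) then B else 1) * (p : ℝ) ^ ((N.factorization p : ℝ) * ε) := by
    intro p hp
    have hp2 : (2:ℝ) ≤ (p:ℝ) := by
      exact_mod_cast (Nat.prime_of_mem_primeFactors hp).two_le
    set a : ℕ := N.factorization p with ha
    by_cases hsm : (p:ℝ) < (2:ℝ) ^ (1/ε)
    · rw [if_pos hsm]
      have h2a : (2:ℝ) ^ ((a:ℝ) * ε) ≤ (p:ℝ) ^ ((a:ℝ) * ε) :=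
        Real.rpow_le_rpow (by norm_num) hp2 (by positivity)
      have h2exp : (2:ℝ) ^ ((a:ℝ) * ε) = Real.exp (c * a) := by
        rw [Real.rpow_def_of_pos (by norm_num)]
        congr 1; rw [hc]; ring
      have hstep : ((a:ℝ) + 1) ≤ (Real.exp c / c) * Real.exp (c * a) := by
        have h1 : c * ((a:ℝ) + 1) ≤ Real.exp (c * ((a:ℝ)+1)) := (Real.add_one_le_exp _).trans' (by linarith)
        have h2 : Real.exp (c * ((a:ℝ)+1)) = Real.exp c * Real.exp (c * a) := by
          rw [← Real.exp_add]; ring_nf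
        rw [div_mul_eq_mul_div, le_div_iff₀ hc0]
        calc ((a:ℝ)+1) * c = c * ((a:ℝ)+1) := by ring
        _ ≤ Real.exp c * Real.exp (c * a) := by rw [← h2]; exact h1
      calc ((a:ℝ) + 1) ≤ (Real.exp c / c) * Real.exp (c * a) := hstep
        _ ≤ B * (2:ℝ) ^ ((a:ℝ)*ε) := by rw [h2exp]; gcongr; exact le_max_right _ _
        _ ≤ B * (p:ℝ) ^ ((a:ℝ)*ε) := mul_le_mul_of_nonneg_left h2a (by positivity)
    · rw [if_neg hsm, one_mul]
      have hpε : (2:ℝ) ≤ (p:ℝ) ^ ε := by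
        have := Real.rpow_le_rpow (by positivity) (not_lt.mp hsm) hε.le
        rwa [← Real.rpow_mul (by norm_num), one_div_mul_cancel hε.ne', Real.rpow_one] at this
      have : (p:ℝ) ^ ((a:ℝ) * ε) = ((p:ℝ) ^ ε) ^ a := by
        rw [mul_comm, Real.rpow_mul (by positivity), Real.rpow_natCast]
      rw [this]
      calc ((a:ℝ) + 1) ≤ (2:ℝ) ^ a := by
            have := Nat.lt_two_pow_self (n := a)
            exact_mod_cast this
        _ ≤ ((p:ℝ) ^ ε) ^ a := pow_le_pow_left₀ (by norm_num) hpε a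
  have hwprod : (∏ p ∈ N.primeFactors, (if (p:ℝ) < (2:ℝ) ^ (1/ε) then B else 1)) ≤ B ^ P := by
    rw [Finset.prod_ite, Finset.prod_const, Finset.prod_const, one_pow, mul_one]
    refine pow_le_pow_right₀ hB1 ?_
    have hsub : Finset.filter (fun p : ℕ => (p:ℝ) < (2:ℝ) ^ (1/ε)) N.primeFactors ⊆ Finset.range P := by
      intro p hp
      rw [Finset.mem_range, Nat.lt_ceil]
      exact (Finset.mem_filter.mp hp).2
    simpa using Finset.card_le_card hsub
  calc (N.divisors.card : ℝ)
      = ∏ p ∈ N.primeFactors, ((N.factorization p : ℝ) + 1) := hτ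
    _ ≤ ∏ p ∈ N.primeFactors,
        ((if (p:ℝ) < (2:ℝ) ^ (1/ε) then B else 1) * (p : ℝ) ^ ((N.factorization p : ℝ) * ε)) :=
        Finset.prod_le_prod (fun p _ => by positivity) key
    _ = (∏ p ∈ N.primeFactors, (if (p:ℝ) < (2:ℝ) ^ (1/ε) then B else 1)) *
        ∏ p ∈ N.primeFactors, (p : ℝ) ^ ((N.factorization p : ℝ) * ε) := Finset.prod_mul_distrib
    _ ≤ B ^ P * (N : ℝ) ^ ε := by
        rw [hNε]
        exact mul_le_mul_of_nonneg_right hwprod (Finset.prod_nonneg fun p _ => by positivity)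
open Polynomial in
lemma count_le_tau (n : ℕ) (hn : 3 ≤ n) (m : ℤ) (hm : m ≠ 0) :
    Set.ncard {p : ℤ × ℤ | (n : ℤ) ^ n * (p.2 ^ (n - 1) - p.1 ^ (n - 1)) = m}
      ≤ 2 * m.natAbs.divisors.card * (n - 1) := by
  classical
  set k := n - 1 with hk
  have hk2 : 2 ≤ k := by omega
  have hnn : ((n : ℤ)) ^ n ≠ 0 := pow_ne_zero _ (by exact_mod_cast by omega)
  set D : Finset ℤ := m.natAbs.divisors.image (Nat.cast) ∪
    m.natAbs.divisors.image (fun t : ℕ => -(t : ℤ)) with hD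
  set P : ℤ → ℤ[X] := fun d => C ((n:ℤ)^n) * ((X + C d) ^ k - X ^ k) - C m with hPdef
  have hPne : ∀ d : ℤ, d ≠ 0 → P d ≠ 0 := by
    intro d hd h0
    have hco : (P d).coeff (k - 1) = (n:ℤ)^n * (d * k) := by
      simp only [hPdef, coeff_sub, coeff_C_mul, coeff_X_add_C_pow, coeff_X_pow,
        coeff_C, if_neg (by omega : ¬ (k - 1 = k)), if_neg (by omega : ¬ (k - 1 = 0))]
      have hch : k.choose (k-1) = k := by
        have := Nat.choose_symm (by omega : 1 ≤ k)
        rw [this, Nat.choose_one_right]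
      rw [(by omega : k - (k-1) = 1), hch]
      ring
    rw [h0] at hco
    simp only [coeff_zero] at hco
    have : d * k ≠ 0 := mul_ne_zero hd (by exact_mod_cast by omega)
    exact (mul_ne_zero hnn this) hco.symm
  set F : Finset (ℤ × ℤ) :=
    D.biUnion (fun d => (P d).roots.toFinset.image (fun y => (y, y + d))) with hF
  have hsub : {p : ℤ × ℤ | (n : ℤ) ^ n * (p.2 ^ (n - 1) - p.1 ^ (n - 1)) = m} ⊆ ↑F := by
    rintro ⟨y, x⟩ hp
    simp only [Set.mem_setOf_eq] at hp
    set d : ℤ := x - y with hd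
    have hd0 : d ≠ 0 := by
      intro h
      have : x = y := by omega
      rw [this] at hp
      simp at hp
      exact hm hp.symm
    have hdvd : d ∣ m := by
      rw [← hp]
      exact Dvd.dvd.mul_left (sub_dvd_pow_sub_pow x y k) _
    have hdD : d ∈ D := by
      have h1 : d.natAbs ∈ m.natAbs.divisors :=
        Nat.mem_divisors.mpr ⟨Int.natAbs_dvd_natAbs.mpr hdvd, Int.natAbs_ne_zero.mpr hm⟩
      rcases Int.natAbs_eq d with h | h
      · exact Finset.mem_union_left _ (Finset.mem_image.mpr ⟨d.natAbs, h1, h.symm⟩)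
      · exact Finset.mem_union_right _ (Finset.mem_image.mpr ⟨d.natAbs, h1, h.symm⟩)
    have hroot : y ∈ (P d).roots.toFinset := by
      rw [Multiset.mem_toFinset, mem_roots (hPne d hd0)]
      simp only [hPdef, IsRoot.def, eval_sub, eval_mul, eval_C, eval_pow, eval_add, eval_X]
      have hx : y + d = x := by omega
      rw [hx, hp, sub_self]
    refine Finset.mem_coe.mpr (Finset.mem_biUnion.mpr ⟨d, hdD, Finset.mem_image.mpr ⟨y, hroot, ?_⟩⟩)
    simp [hd]
  have hdeg : ∀ d : ℤ, (P d).natDegree ≤ k := by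
    intro d
    simp only [hPdef]
    compute_degree
  calc Set.ncard {p : ℤ × ℤ | (n : ℤ) ^ n * (p.2 ^ (n - 1) - p.1 ^ (n - 1)) = m}
      ≤ Set.ncard (↑F : Set (ℤ × ℤ)) := Set.ncard_le_ncard hsub F.finite_toSet
    _ = F.card := Set.ncard_coe_finset F
    _ ≤ ∑ d ∈ D, ((P d).roots.toFinset.image (fun y => (y, y + d))).card :=
        Finset.card_biUnion_le
    _ ≤ ∑ _d ∈ D, k := Finset.sum_le_sum (fun d _ => by
        calc ((P d).roots.toFinset.image (fun y => (y, y + d))).card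
            ≤ (P d).roots.toFinset.card := Finset.card_image_le
          _ ≤ Multiset.card (P d).roots := Multiset.toFinset_card_le _
          _ ≤ (P d).natDegree := (P d).card_roots'
          _ ≤ k := hdeg d)
    _ = D.card * k := by rw [Finset.sum_const, smul_eq_mul]
    _ ≤ (2 * m.natAbs.divisors.card) * k := by
        have : D.card ≤ 2 * m.natAbs.divisors.card := by
          calc D.card ≤ (m.natAbs.divisors.image (Nat.cast : ℕ → ℤ)).card +
              (m.natAbs.divisors.image (fun t : ℕ => -(t : ℤ))).card := Finset.card_union_le _ _
            _ ≤ m.natAbs.divisors.card + m.natAbs.divisors.card :=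
                add_le_add Finset.card_image_le Finset.card_image_le
            _ = 2 * m.natAbs.divisors.card := by ring
        exact Nat.mul_le_mul_right _ this

lemma two_le_tau {N : ℕ} (hN : 2 ≤ N) : 2 ≤ N.divisors.card := by
  have h1 : ({1, N} : Finset ℕ) ⊆ N.divisors := by
    intro x hx
    rcases Finset.mem_insert.mp hx with h | h
    · subst h; exact Nat.one_mem_divisors.mpr (by omega)
    · rw [Finset.mem_singleton] at h; subst h; exact Nat.mem_divisors_self _ (by omega)
  calc 2 = ({1, N} : Finset ℕ).card := (Finset.card_pair (by omega)).symm
    _ ≤ N.divisors.card := Finset.card_le_card h1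


/-- Fix `n ≥ 3`. For nonzero integers `a₁ ≠ a₂`, set
`m = (n-1)^(n-1) (a₁^n − a₂^n)` and assume `m ≠ 0`. Then the number of integer pairs
`(b₁, b₂)` with `n^n (b₂^(n-1) − b₁^(n-1)) = m` is at most the number of divisors
of `m` raised to a bounded power; in particular it is `O_ε(|m|^ε)`. -/
theorem count_pairs_fixed_difference (n : ℕ) (hn : 3 ≤ n) :
    (∃ k : ℕ, ∀ a₁ a₂ m : ℤ, a₁ ≠ 0 → a₂ ≠ 0 → a₁ ≠ a₂ →
        m = ((n : ℤ) - 1) ^ (n - 1) * (a₁ ^ n - a₂ ^ n) → m ≠ 0 →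
        Set.ncard {p : ℤ × ℤ | (n : ℤ) ^ n * (p.2 ^ (n - 1) - p.1 ^ (n - 1)) = m}
          ≤ m.natAbs.divisors.card ^ k) ∧
    (∀ ε : ℝ, 0 < ε → ∃ C : ℝ, 0 < C ∧ ∀ a₁ a₂ m : ℤ, a₁ ≠ 0 → a₂ ≠ 0 → a₁ ≠ a₂ →
        m = ((n : ℤ) - 1) ^ (n - 1) * (a₁ ^ n - a₂ ^ n) → m ≠ 0 →
        (Set.ncard {p : ℤ × ℤ | (n : ℤ) ^ n * (p.2 ^ (n - 1) - p.1 ^ (n - 1)) = m} : ℝ)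
          ≤ C * (|m| : ℝ) ^ ε) := by
  -- |m| ≥ 2 for all admissible m
  have habs : ∀ a₁ a₂ m : ℤ, a₁ ≠ 0 → a₂ ≠ 0 → a₁ ≠ a₂ →
      m = ((n : ℤ) - 1) ^ (n - 1) * (a₁ ^ n - a₂ ^ n) → m ≠ 0 → 2 ≤ m.natAbs := by
    intro a₁ a₂ m _ _ _ hmeq hm
    have hB : a₁ ^ n - a₂ ^ n ≠ 0 := by
      intro h; rw [hmeq, h, mul_zero] at hm; exact hm rfl
    have hB1 : (1 : ℤ) ≤ |a₁ ^ n - a₂ ^ n| := Int.one_le_abs hB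
    have hA2 : (2 : ℤ) ≤ ((n : ℤ) - 1) ^ (n - 1) := by
      calc (2:ℤ) ≤ (n:ℤ) - 1 := by
            have : (3:ℤ) ≤ (n:ℤ) := by exact_mod_cast hn
            linarith
        _ ≤ ((n : ℤ) - 1) ^ (n - 1) := le_self_pow₀ (by
            have : (3:ℤ) ≤ (n:ℤ) := by exact_mod_cast hn
            linarith) (by omega)
    have : (2 : ℤ) ≤ |m| := by
      rw [hmeq, abs_mul, abs_of_nonneg (by positivity : (0:ℤ) ≤ ((n : ℤ) - 1) ^ (n - 1))]
      calc (2:ℤ) ≤ ((n : ℤ) - 1) ^ (n - 1) := hA2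
        _ = ((n : ℤ) - 1) ^ (n - 1) * 1 := (mul_one _).symm
        _ ≤ ((n : ℤ) - 1) ^ (n - 1) * |a₁ ^ n - a₂ ^ n| := by
            exact mul_le_mul_of_nonneg_left hB1 (by positivity)
    rw [Int.abs_eq_natAbs] at this
    exact_mod_cast this
  constructor
  · refine ⟨n + 1, fun a₁ a₂ m h1 h2 h3 hmeq hm => ?_⟩
    have hτ2 : 2 ≤ m.natAbs.divisors.card := two_le_tau (habs a₁ a₂ m h1 h2 h3 hmeq hm)
    set τ := m.natAbs.divisors.card with hτ
    calc Set.ncard {p : ℤ × ℤ | (n : ℤ) ^ n * (p.2 ^ (n - 1) - p.1 ^ (n - 1)) = m}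
        ≤ 2 * τ * (n - 1) := count_le_tau n hn m hm
      _ = (2 * (n - 1)) * τ := by ring
      _ ≤ 2 ^ n * τ := Nat.mul_le_mul_right _ (by
          have := Nat.lt_two_pow_self (n := n - 1)
          calc 2 * (n - 1) ≤ 2 * 2 ^ (n - 1) := by omega
            _ = 2 ^ (n - 1 + 1) := by ring
            _ ≤ 2 ^ n := Nat.pow_le_pow_right (by omega) (by omega))
      _ ≤ τ ^ n * τ := Nat.mul_le_mul_right _ (Nat.pow_le_pow_left hτ2 n)
      _ = τ ^ (n + 1) := by ring
  · intro ε hε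
    obtain ⟨C₀, hC₀, hC⟩ := tau_le_rpow ε hε
    refine ⟨((2 * (n - 1) : ℕ) : ℝ) * C₀,
      mul_pos (by exact_mod_cast (by omega : 0 < 2 * (n - 1))) hC₀,
      fun a₁ a₂ m h1 h2 h3 hmeq hm => ?_⟩
    have hm2 : 2 ≤ m.natAbs := habs a₁ a₂ m h1 h2 h3 hmeq hm
    have hcount := count_le_tau n hn m hm
    have hτ := hC m.natAbs (by omega)
    have hcast : ((m.natAbs : ℕ) : ℝ) = |(m : ℝ)| := by
      rw [Nat.cast_natAbs]; exact Int.cast_abs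
    calc (Set.ncard {p : ℤ × ℤ | (n : ℤ) ^ n * (p.2 ^ (n - 1) - p.1 ^ (n - 1)) = m} : ℝ)
        ≤ ((2 * m.natAbs.divisors.card * (n - 1) : ℕ) : ℝ) := by exact_mod_cast hcount
      _ = (2 * (n - 1) : ℕ) * (m.natAbs.divisors.card : ℝ) := by push_cast; ring
      _ ≤ (2 * (n - 1) : ℕ) * (C₀ * (m.natAbs : ℝ) ^ ε) := by
          exact mul_le_mul_of_nonneg_left hτ (by positivity)
      _ = ((2 * (n - 1) : ℕ) : ℝ) * C₀ * |(m : ℝ)| ^ ε := by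
          rw [← hcast]; ring
end

section
/- Assume the abc conjecture. Let n ≥ 5 be odd, δ₀ > 0, and B > A^{1+δ₀} with A sufficiently large. If A ≤ a ≤ 2A, B ≤ |b| ≤ 2B, and gcd((n-1)a, nb) = 1, then T(a,b) and T(-a,b) cannot both be divisible by the square of a prime exceeding B, where T(a,b) = (n-1)^{n-1}a^n + n^n b^{n-1}. -/
/-- The radical of a natural number: the product of its distinct prime factors. -/
def rad (m : ℕ) : ℕ := ∏ p ∈ m.primeFactors, p

lemma rad_pos (m : ℕ) : 0 < rad m :=
  Finset.prod_pos fun p hp => (Nat.prime_of_mem_primeFactors hp).pos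

lemma rad_dvd (m : ℕ) : rad m ∣ m := Nat.prod_primeFactors_dvd m

lemma rad_le {m : ℕ} (h : m ≠ 0) : rad m ≤ m :=
  Nat.le_of_dvd (Nat.pos_of_ne_zero h) (rad_dvd m)

lemma rad_mul_le (a b : ℕ) : rad (a * b) ≤ rad a * rad b := by
  rcases eq_or_ne a 0 with rfl | ha
  · simpa [rad] using Nat.one_le_iff_ne_zero.mpr (rad_pos b).ne'
  rcases eq_or_ne b 0 with rfl | hb
  · simpa [rad] using Nat.one_le_iff_ne_zero.mpr (rad_pos a).ne'
  unfold rad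
  rw [Nat.primeFactors_mul ha hb]
  calc ∏ p ∈ a.primeFactors ∪ b.primeFactors, p
      ≤ (∏ p ∈ a.primeFactors, p) * ∏ p ∈ b.primeFactors \ a.primeFactors, p := by
        rw [← Finset.prod_union Finset.disjoint_sdiff]
        apply Finset.prod_le_prod_of_subset_of_one_le'
        · intro x hx
          simp only [Finset.mem_union, Finset.mem_sdiff] at hx ⊢
          tauto
        · intro i hi _
          simp only [Finset.mem_union, Finset.mem_sdiff] at hi
          rcases hi with h | h
          · exact (Nat.prime_of_mem_primeFactors h).one_lt.le
          · exact (Nat.prime_of_mem_primeFactors h.1).one_lt.le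

    _ ≤ (∏ p ∈ a.primeFactors, p) * ∏ p ∈ b.primeFactors, p := by
        apply Nat.mul_le_mul_left
        apply Finset.prod_le_prod_of_subset_of_one_le' (Finset.sdiff_subset)
        exact fun i hi _ => (Nat.prime_of_mem_primeFactors hi).one_lt.le

lemma rad_pow (a : ℕ) {k : ℕ} (hk : k ≠ 0) : rad (a ^ k) = rad a := by
  unfold rad; rw [Nat.primeFactors_pow a hk]

lemma rad_prime_sq {p : ℕ} (hp : p.Prime) : rad (p ^ 2) = p := by
  rw [rad_pow p (by norm_num)]
  unfold rad
  rw [Nat.Prime.primeFactors hp, Finset.prod_singleton]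

lemma rad_mul_pq_le {p q Y : ℕ} (hp : p.Prime) (hq : q.Prime) (hY : Y ≠ 0)
    (h : p ^ 2 * q ^ 2 ∣ Y) : rad Y * (p * q) ≤ Y := by
  obtain ⟨m, rfl⟩ := h
  have hm : m ≠ 0 := by rintro rfl; simp at hY
  have h1 : rad (p ^ 2 * q ^ 2 * m) ≤ p * q * rad m := by
    calc rad (p ^ 2 * q ^ 2 * m) ≤ rad (p ^ 2 * q ^ 2) * rad m := rad_mul_le _ _
      _ ≤ rad (p ^ 2) * rad (q ^ 2) * rad m :=
          Nat.mul_le_mul_right _ (rad_mul_le _ _)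
      _ = p * q * rad m := by rw [rad_prime_sq hp, rad_prime_sq hq]
  calc rad (p ^ 2 * q ^ 2 * m) * (p * q) ≤ p * q * rad m * (p * q) :=
        Nat.mul_le_mul_right _ h1
    _ ≤ p * q * m * (p * q) := by
        exact Nat.mul_le_mul_right _ (Nat.mul_le_mul_left _ (rad_le hm))
    _ = p ^ 2 * q ^ 2 * m := by ring

lemma exponent_facts (N δ₀ ε : ℝ) (hN : 5 ≤ N) (hδ : 0 < δ₀) (hε : 0 < ε)
    (h : ε * (8*N*(1+δ₀)) = δ₀) :
    2*N*ε ≤ 1/4 ∧ (2*N - 2)*ε - (1+ε) ≤ 0 ∧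
    (1+ε) + (1+δ₀)*((2*N-2)*ε - (1+ε)) ≤ -(δ₀/2) ∧
    ((1+ε) + (2*N)*ε) - (1+δ₀)*(1+ε) ≤ -(δ₀/2) := by
  have he5 : (1+δ₀)*(2*N*ε) = δ₀/4 := by linear_combination h/4
  have h0 : 0 ≤ 2*N*ε := by nlinarith
  have hδε : 0 ≤ δ₀*ε := mul_nonneg hδ.le hε.le
  have h1 : 2*N*ε ≤ 1/4 := by nlinarith
  have h2 : 2*N*ε ≤ δ₀/4 := by nlinarith
  refine ⟨h1, by nlinarith, by nlinarith, by nlinarith⟩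

/-- The abc conjecture: for every `ε > 0` there is `C_ε > 0` such that all coprime
positive integers `x + y = z` satisfy `z ≤ C_ε · rad(xyz)^(1+ε)`. -/
def AbcConjecture : Prop :=
  ∀ ε : ℝ, 0 < ε → ∃ C : ℝ, 0 < C ∧ ∀ x y z : ℕ, 0 < x → 0 < y →
    Nat.Coprime x y → x + y = z → (z : ℝ) ≤ C * (rad (x * y * z) : ℝ) ^ (1 + ε)

set_option maxHeartbeats 2000000 in
/-- Assuming abc: for odd `n ≥ 5`, `δ₀ > 0`, `A` sufficiently large and `B > A^(1+δ₀)`,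
if `A ≤ a ≤ 2A`, `B ≤ |b| ≤ 2B` and `gcd((n-1)a, nb) = 1`, then
`T(a,b) = (n-1)^(n-1) a^n + n^n b^(n-1)` and `T(-a,b)` cannot both be divisible by the
square of a prime exceeding `B`. -/
theorem not_both_bad (habc : AbcConjecture) (n : ℕ) (hn : 5 ≤ n) (hodd : Odd n)
    (δ₀ : ℝ) (hδ : 0 < δ₀) :
    ∃ A₀ : ℝ, ∀ A B : ℝ, A₀ ≤ A → A ^ (1 + δ₀) < B → ∀ a b : ℤ,
      A ≤ (a : ℝ) → (a : ℝ) ≤ 2 * A → B ≤ |(b : ℝ)| → |(b : ℝ)| ≤ 2 * B →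
      Int.gcd (((n : ℤ) - 1) * a) ((n : ℤ) * b) = 1 →
      ¬ ((∃ p : ℕ, p.Prime ∧ B < (p : ℝ) ∧
            ((p : ℤ)) ^ 2 ∣ ((n : ℤ) - 1) ^ (n - 1) * a ^ n + (n : ℤ) ^ n * b ^ (n - 1)) ∧
         (∃ q : ℕ, q.Prime ∧ B < (q : ℝ) ∧
            ((q : ℤ)) ^ 2 ∣ ((n : ℤ) - 1) ^ (n - 1) * (-a) ^ n + (n : ℤ) ^ n * b ^ (n - 1))) := by
  have hn5 : (5:ℝ) ≤ (n:ℝ) := by exact_mod_cast hn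
  have hnR : (1:ℝ) ≤ (n:ℝ) := by linarith
  have hn1n : 1 ≤ n := by omega
  have hn1ne : n - 1 ≠ 0 := by omega
  have hnne : n ≠ 0 := by omega
  set ε : ℝ := δ₀ / (8 * (n:ℝ) * (1 + δ₀)) with hεdef
  have hden : (0:ℝ) < 8 * (n:ℝ) * (1 + δ₀) := by nlinarith
  have hε : 0 < ε := div_pos hδ hden
  have hεn : ε * (8 * (n:ℝ) * (1 + δ₀)) = δ₀ := by
    rw [hεdef]; field_simp
  have hε1 : ε ≤ 1 := by nlinarith
  obtain ⟨C, hC, habc'⟩ := habc ε hε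
  set K : ℝ := ((n:ℝ)^n * 2^n)^2 with hKdef
  have hnn1 : (1:ℝ) ≤ (n:ℝ)^n := one_le_pow₀ hnR
  have h2n1 : (1:ℝ) ≤ 2^n := one_le_pow₀ one_le_two
  have hK1 : (1:ℝ) ≤ K := by rw [hKdef]; exact one_le_pow₀ (by nlinarith)
  set C₄ : ℝ := C * (4 * (n:ℝ)^2)^(2:ℝ) * (2*K) with hC₄def
  have h4n2 : (1:ℝ) ≤ 4 * (n:ℝ)^2 := by nlinarith
  have hC₄ : 0 < C₄ := by
    rw [hC₄def]
    have h1 : (0:ℝ) < (4 * (n:ℝ)^2)^(2:ℝ) := Real.rpow_pos_of_pos (by nlinarith) _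
    have h2 : (0:ℝ) < 2*K := by linarith
    exact mul_pos (mul_pos hC h1) h2
  refine ⟨(2*C₄+1) ^ (2/δ₀) + 3, ?_⟩
  intro A B hA hAB a b ha1 ha2 hb1 hb2 hg
  rintro ⟨⟨p, hp, hpB, hpd⟩, ⟨q, hq, hqB, hqd⟩⟩
  have hrp0 : (0:ℝ) ≤ (2*C₄+1) ^ (2/δ₀) := (Real.rpow_pos_of_pos (by linarith) _).le
  have hA3 : (3:ℝ) ≤ A := by linarith
  have hA1 : (1:ℝ) ≤ A := by linarith
  have hA0 : (0:ℝ) < A := by linarith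
  have hAB' : A ≤ A ^ (1 + δ₀) := by
    calc A = A ^ (1:ℝ) := (Real.rpow_one A).symm
    _ ≤ A ^ (1 + δ₀) := Real.rpow_le_rpow_of_exponent_le hA1 (by linarith)
  have hB3 : (3:ℝ) ≤ B := by linarith
  have hB0 : (0:ℝ) < B := by linarith
  have hB1 : (1:ℝ) ≤ B := by linarith
  -- integer positivity
  have ha_pos : (0:ℤ) < a := by exact_mod_cast show (0:ℝ) < (a:ℝ) by linarith
  set a' : ℕ := a.natAbs with ha'def
  set b' : ℕ := b.natAbs with hb'def
  have haa : ((a':ℕ):ℤ) = a := Int.natAbs_of_nonneg ha_pos.le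
  have haR : ((a':ℕ):ℝ) = (a:ℝ) := by exact_mod_cast congrArg (Int.cast : ℤ → ℝ) haa
  have hbR : ((b':ℕ):ℝ) = |(b:ℝ)| := by rw [hb'def]; push_cast [Nat.cast_natAbs]; rfl
  have ha'1 : 1 ≤ a' := by
    have : (1:ℝ) ≤ ((a':ℕ):ℝ) := by rw [haR]; linarith
    exact_mod_cast this
  have hb'1 : 1 ≤ b' := by
    have : (1:ℝ) ≤ ((b':ℕ):ℝ) := by rw [hbR]; linarith
    exact_mod_cast this
  have hn1 : ((n - 1 : ℕ) : ℤ) = (n:ℤ) - 1 := by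
    rw [Nat.cast_sub hn1n]; norm_num
  have heven : Even (n - 1) := Nat.Odd.sub_odd hodd odd_one
  set X : ℕ := ((n-1)^(n-1) * a'^n)^2 with hXdef
  set Z : ℕ := (n^n * b'^(n-1))^2 with hZdef
  have hXint : ((X:ℕ):ℤ) = (((n:ℤ)-1)^(n-1) * a^n)^2 := by
    rw [hXdef]; push_cast [Nat.cast_sub hn1n, haa]; ring
  have hZint : ((Z:ℕ):ℤ) = ((n:ℤ)^n * b^(n-1))^2 := by
    have hb2' : ((b':ℕ):ℤ)^(n-1) = b^(n-1) := by
      rw [hb'def, show ((b.natAbs:ℕ):ℤ) = |b| from (Int.abs_eq_natAbs b).symm]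
      exact Even.pow_abs heven b
    rw [hZdef]; push_cast; rw [hb2']
  have hid : ((((n:ℤ)-1)^(n-1) * a^n + (n:ℤ)^n * b^(n-1)) *
      ((((n:ℤ)-1)^(n-1) * (-a)^n + (n:ℤ)^n * b^(n-1)))) = ((Z:ℕ):ℤ) - ((X:ℕ):ℤ) := by
    rw [hXint, hZint, Odd.neg_pow hodd]; ring
  -- coprimality basics
  have c0 : Nat.Coprime ((n-1) * a') (n * b') := by
    have e1 : (((n:ℤ) - 1) * a).natAbs = (n-1) * a' := by
      rw [Int.natAbs_mul, ← hn1, Int.natAbs_natCast]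
    have e2 : ((n:ℤ) * b).natAbs = n * b' := by
      rw [Int.natAbs_mul, Int.natAbs_natCast]
    have hgn : Nat.gcd ((((n:ℤ)-1)*a).natAbs) (((n:ℤ)*b).natAbs) = 1 := hg
    rw [e1, e2] at hgn
    exact hgn
  have hdX : X ∣ ((n-1) * a')^(2*n) := by
    refine ⟨(n-1)^2, ?_⟩
    rw [hXdef, mul_pow, mul_pow, ← pow_mul, ← pow_mul, mul_right_comm, ← pow_add,
      show (n-1)*2+2 = 2*n by omega, show n*2 = 2*n by omega]
  have hdZ : Z ∣ (n * b')^(2*n) := by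
    refine ⟨b'^2, ?_⟩
    rw [hZdef, mul_pow, mul_pow, ← pow_mul, ← pow_mul, mul_assoc, ← pow_add,
      show (n-1)*2+2 = 2*n by omega, show n*2 = 2*n by omega]
  have cXZ : Nat.Coprime X Z :=
    Nat.Coprime.coprime_dvd_left hdX (Nat.Coprime.coprime_dvd_right hdZ (Nat.Coprime.pow _ _ c0))
  -- p ≠ q
  have hpq : p ≠ q := by
    intro he
    subst he
    have hpZ : Prime (p:ℤ) := Int.prime_iff_natAbs_prime.mpr (by simpa using hp)
    have d1 : (p:ℤ) ∣ (((n:ℤ)-1)^(n-1) * a^n + (n:ℤ)^n * b^(n-1)) :=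
      (dvd_pow_self (p:ℤ) two_ne_zero).trans hpd
    have d2 : (p:ℤ) ∣ (((n:ℤ)-1)^(n-1) * (-a)^n + (n:ℤ)^n * b^(n-1)) :=
      (dvd_pow_self (p:ℤ) two_ne_zero).trans hqd
    have s1 : (p:ℤ) ∣ 2 * ((n:ℤ)^n * b^(n-1)) := by
      have := dvd_add d1 d2
      have he2 : (((n:ℤ)-1)^(n-1) * a^n + (n:ℤ)^n * b^(n-1)) +
          (((n:ℤ)-1)^(n-1) * (-a)^n + (n:ℤ)^n * b^(n-1)) = 2 * ((n:ℤ)^n * b^(n-1)) := by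
        rw [Odd.neg_pow hodd]; ring
      rwa [he2] at this
    have s2 : (p:ℤ) ∣ 2 * (((n:ℤ)-1)^(n-1) * a^n) := by
      have := dvd_sub d1 d2
      have he2 : (((n:ℤ)-1)^(n-1) * a^n + (n:ℤ)^n * b^(n-1)) -
          (((n:ℤ)-1)^(n-1) * (-a)^n + (n:ℤ)^n * b^(n-1)) = 2 * (((n:ℤ)-1)^(n-1) * a^n) := by
        rw [Odd.neg_pow hodd]; ring
      rwa [he2] at this
    have hp2 : ¬ (p:ℤ) ∣ 2 := by
      intro h
      have h2 : p ∣ 2 := by exact_mod_cast h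
      have := Nat.le_of_dvd (by norm_num) h2
      have : (p:ℝ) ≤ 2 := by exact_mod_cast this
      linarith
    have t1 : (p:ℤ) ∣ (n:ℤ) * b := by
      rcases hpZ.dvd_mul.mp s1 with h | h
      · exact absurd h hp2
      rcases hpZ.dvd_mul.mp h with h' | h'
      · exact dvd_mul_of_dvd_left (hpZ.dvd_of_dvd_pow h') b
      · exact dvd_mul_of_dvd_right (hpZ.dvd_of_dvd_pow h') (n:ℤ)
    have t2 : (p:ℤ) ∣ ((n:ℤ) - 1) * a := by
      rcases hpZ.dvd_mul.mp s2 with h | h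
      · exact absurd h hp2
      rcases hpZ.dvd_mul.mp h with h' | h'
      · exact dvd_mul_of_dvd_left (hpZ.dvd_of_dvd_pow h') a
      · exact dvd_mul_of_dvd_right (hpZ.dvd_of_dvd_pow h') ((n:ℤ) - 1)
    have hd := Int.dvd_gcd t2 t1
    rw [hg] at hd
    have hpd1 : p ∣ 1 := by exact_mod_cast hd
    exact hp.one_lt.ne' (Nat.dvd_one.mp hpd1)
  -- positivity of X, Z
  have hn1pos : 0 < n - 1 := by omega
  have h1n1R : (1:ℝ) ≤ ((n-1:ℕ):ℝ) := by exact_mod_cast hn1pos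
  have hX0 : 0 < X := by
    rw [hXdef]; exact pow_pos (Nat.mul_pos (pow_pos hn1pos _) (pow_pos ha'1 _)) _
  have hZ0 : 0 < Z := by
    rw [hZdef]; exact pow_pos (Nat.mul_pos (pow_pos (by omega) _) (pow_pos hb'1 _)) _
  -- real bounds
  have haRle : ((a':ℕ):ℝ) ≤ 2*A := by rw [haR]; linarith
  have haRge : A ≤ ((a':ℕ):ℝ) := by rw [haR]; linarith
  have hbRle : ((b':ℕ):ℝ) ≤ 2*B := by rw [hbR]; linarith
  have hbRge : B ≤ ((b':ℕ):ℝ) := by rw [hbR]; linarith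
  have hcast1 : ((n-1:ℕ):ℝ) ≤ (n:ℝ) := by exact_mod_cast Nat.sub_le n 1
  have hcast0 : (0:ℝ) ≤ ((n-1:ℕ):ℝ) := by positivity
  have hXcast : ((X:ℕ):ℝ) = (((n-1:ℕ):ℝ)^(n-1) * ((a':ℕ):ℝ)^n)^2 := by
    rw [hXdef]; push_cast; ring
  have hZcast : ((Z:ℕ):ℝ) = ((n:ℝ)^n * ((b':ℕ):ℝ)^(n-1))^2 := by
    rw [hZdef]; push_cast; ring
  have hinnerX : ((n-1:ℕ):ℝ)^(n-1) * ((a':ℕ):ℝ)^n ≤ (n:ℝ)^n * (2*A)^n := by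
    apply mul_le_mul _ (pow_le_pow_left₀ (by positivity) haRle n) (by positivity) (by positivity)
    calc ((n-1:ℕ):ℝ)^(n-1) ≤ (n:ℝ)^(n-1) := pow_le_pow_left₀ hcast0 hcast1 _
      _ ≤ (n:ℝ)^n := pow_le_pow_right₀ hnR (Nat.sub_le n 1)
  have hXleR : ((X:ℕ):ℝ) ≤ K * (A^n)^2 := by
    rw [hXcast, hKdef]
    calc (((n-1:ℕ):ℝ)^(n-1) * ((a':ℕ):ℝ)^n)^2 ≤ ((n:ℝ)^n * (2*A)^n)^2 :=
      pow_le_pow_left₀ (by positivity) hinnerX 2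
    _ = ((n:ℝ)^n * 2^n)^2 * (A^n)^2 := by rw [mul_pow 2 A]; ring
  have hinnerZ : (n:ℝ)^n * ((b':ℕ):ℝ)^(n-1) ≤ (n:ℝ)^n * 2^n * B^(n-1) := by
    have h1 : ((b':ℕ):ℝ)^(n-1) ≤ (2*B)^(n-1) := pow_le_pow_left₀ (by positivity) hbRle _
    have h2 : (2*B)^(n-1) = 2^(n-1) * B^(n-1) := mul_pow 2 B _
    have h3 : (2:ℝ)^(n-1) ≤ 2^n := pow_le_pow_right₀ one_le_two (Nat.sub_le n 1)
    have hBn : (0:ℝ) ≤ B^(n-1) := by positivity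
    have hnn0 : (0:ℝ) ≤ (n:ℝ)^n := by positivity
    have s1 : (n:ℝ)^n * ((b':ℕ):ℝ)^(n-1) ≤ (n:ℝ)^n * (2^(n-1) * B^(n-1)) := by
      rw [← h2]; exact mul_le_mul_of_nonneg_left h1 hnn0
    have s2 : (n:ℝ)^n * (2^(n-1) * B^(n-1)) ≤ (n:ℝ)^n * 2^n * B^(n-1) := by
      rw [mul_assoc]
      exact mul_le_mul_of_nonneg_left (mul_le_mul_of_nonneg_right h3 hBn) hnn0
    linarith
  have hZleR : ((Z:ℕ):ℝ) ≤ K * (B^(n-1))^2 := by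
    rw [hZcast, hKdef]
    calc ((n:ℝ)^n * ((b':ℕ):ℝ)^(n-1))^2 ≤ ((n:ℝ)^n * 2^n * B^(n-1))^2 :=
      pow_le_pow_left₀ (by positivity) hinnerZ 2
    _ = ((n:ℝ)^n * 2^n)^2 * (B^(n-1))^2 := by ring
  have hZgeR : (B^(n-1))^2 ≤ ((Z:ℕ):ℝ) := by
    rw [hZcast]
    apply pow_le_pow_left₀ (by positivity)
    calc B^(n-1) ≤ ((b':ℕ):ℝ)^(n-1) := pow_le_pow_left₀ hB0.le hbRge _
      _ ≤ (n:ℝ)^n * ((b':ℕ):ℝ)^(n-1) := le_mul_of_one_le_left (by positivity) hnn1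
  have hXgeR : A ≤ ((X:ℕ):ℝ) := by
    have h2 : A ≤ ((n-1:ℕ):ℝ)^(n-1) * ((a':ℕ):ℝ)^n := by
      have hA' : A ≤ ((a':ℕ):ℝ)^n :=
        le_trans (le_self_pow₀ hA1 hnne) (pow_le_pow_left₀ hA0.le haRge n)
      have h1n : (1:ℝ) ≤ ((n-1:ℕ):ℝ)^(n-1) := one_le_pow₀ h1n1R
      calc A ≤ ((a':ℕ):ℝ)^n := hA'
        _ ≤ ((n-1:ℕ):ℝ)^(n-1) * ((a':ℕ):ℝ)^n := le_mul_of_one_le_left (by positivity) h1n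
    rw [hXcast]
    calc A ≤ ((n-1:ℕ):ℝ)^(n-1) * ((a':ℕ):ℝ)^n := h2
      _ ≤ (((n-1:ℕ):ℝ)^(n-1) * ((a':ℕ):ℝ)^n)^2 := le_self_pow₀ (by linarith) two_ne_zero
  have hXZne : X ≠ Z := by
    intro h
    have hX1 : X = 1 := by
      have h2 := cXZ
      rw [← h] at h2
      simpa [Nat.Coprime, Nat.gcd_self] using h2
    have : ((X:ℕ):ℝ) = 1 := by rw [hX1]; norm_num
    linarith [hXgeR]
  obtain ⟨Y, hY0, hYM, hYdvd, habcM⟩ :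
      ∃ Y : ℕ, 0 < Y ∧ Y ≤ max X Z ∧ p^2*q^2 ∣ Y ∧
        ((max X Z : ℕ):ℝ) ≤ C * ((rad (X*Y*Z) : ℕ):ℝ)^(1+ε) := by
    rcases lt_or_gt_of_ne hXZne with hlt | hgt
    · refine ⟨Z - X, by omega, le_trans (Nat.sub_le _ _) (le_max_right _ _), ?_, ?_⟩
      · have hIdvd : ((p:ℤ)^2 * (q:ℤ)^2) ∣ ((Z:ℕ):ℤ) - ((X:ℕ):ℤ) := hid ▸ mul_dvd_mul hpd hqd
        have h2 : (((p^2*q^2 : ℕ)):ℤ) ∣ (((Z - X : ℕ)):ℤ) := by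
          push_cast [Nat.cast_sub hlt.le]
          exact_mod_cast hIdvd
        exact_mod_cast h2
      · have cXY : Nat.Coprime X (Z - X) := by
          have hsum : X + (Z - X) = Z := by omega
          have hg1 : Nat.gcd X (Z-X) ∣ Nat.gcd X Z := by
            apply Nat.dvd_gcd (Nat.gcd_dvd_left _ _)
            have hdd : Nat.gcd X (Z-X) ∣ X + (Z - X) :=
              dvd_add (Nat.gcd_dvd_left _ _) (Nat.gcd_dvd_right _ _)
            rwa [hsum] at hdd
          have h2 := cXZ
          rw [Nat.Coprime] at h2
          rw [h2] at hg1
          exact Nat.dvd_one.mp hg1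
        have := habc' X (Z-X) Z hX0 (by omega) cXY (by omega)
        rw [max_eq_right hlt.le]
        exact this
    · refine ⟨X - Z, by omega, le_trans (Nat.sub_le _ _) (le_max_left _ _), ?_, ?_⟩
      · have hIdvd : ((p:ℤ)^2 * (q:ℤ)^2) ∣ ((Z:ℕ):ℤ) - ((X:ℕ):ℤ) := hid ▸ mul_dvd_mul hpd hqd
        have h3 : ((p:ℤ)^2*(q:ℤ)^2) ∣ ((X:ℕ):ℤ) - ((Z:ℕ):ℤ) := by
          have := dvd_neg.mpr hIdvd
          rwa [neg_sub] at this
        have h2 : (((p^2*q^2 : ℕ)):ℤ) ∣ (((X - Z : ℕ)):ℤ) := by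
          push_cast [Nat.cast_sub hgt.le]
          exact_mod_cast h3
        exact_mod_cast h2
      · have cZY : Nat.Coprime Z (X - Z) := by
          have hsum : Z + (X - Z) = X := by omega
          have hg1 : Nat.gcd Z (X-Z) ∣ Nat.gcd Z X := by
            apply Nat.dvd_gcd (Nat.gcd_dvd_left _ _)
            have hdd : Nat.gcd Z (X-Z) ∣ Z + (X - Z) :=
              dvd_add (Nat.gcd_dvd_left _ _) (Nat.gcd_dvd_right _ _)
            rwa [hsum] at hdd
          have h2 := cXZ.symm
          rw [Nat.Coprime] at h2
          rw [h2] at hg1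
          exact Nat.dvd_one.mp hg1
        have h4 := habc' Z (X-Z) X hZ0 (by omega) cZY (by omega)
        rw [max_eq_left hgt.le, show X*(X-Z)*Z = Z*(X-Z)*X from by ring]
        exact h4
  set M : ℕ := max X Z with hMdef
  have hM0 : 0 < M := lt_of_lt_of_le hX0 (le_max_left _ _)
  have hMR1 : (1:ℝ) ≤ ((M:ℕ):ℝ) := by exact_mod_cast hM0
  have hMR0 : (0:ℝ) < ((M:ℕ):ℝ) := by linarith
  have hMcast : ((M:ℕ):ℝ) = max ((X:ℕ):ℝ) ((Z:ℕ):ℝ) := Nat.cast_max X Z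
  have hMle : ((M:ℕ):ℝ) ≤ K*(A^n)^2 + K*(B^(n-1))^2 := by
    rw [hMcast]
    apply max_le
    · have h0 : (0:ℝ) ≤ K*(B^(n-1))^2 := by positivity
      linarith [hXleR]
    · have h0 : (0:ℝ) ≤ K*(A^n)^2 := by positivity
      linarith [hZleR]
  -- radical bounds
  have hradXn : rad X ≤ (n-1) * a' := by
    have h1 : rad X = rad ((n-1)^(n-1) * a'^n) := by rw [hXdef]; exact rad_pow _ two_ne_zero
    rw [h1]
    calc rad ((n-1)^(n-1) * a'^n) ≤ rad ((n-1)^(n-1)) * rad (a'^n) := rad_mul_le _ _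
      _ = rad (n-1) * rad a' := by rw [rad_pow _ hn1ne, rad_pow _ hnne]
      _ ≤ (n-1) * a' := Nat.mul_le_mul (rad_le (by omega)) (rad_le (by omega))
  have hradX : ((rad X : ℕ):ℝ) ≤ (n:ℝ) * (2*A) := by
    calc ((rad X : ℕ):ℝ) ≤ (((n-1) * a' : ℕ):ℝ) := by exact_mod_cast hradXn
      _ = ((n-1:ℕ):ℝ) * ((a':ℕ):ℝ) := by push_cast; ring
      _ ≤ (n:ℝ) * (2*A) := mul_le_mul hcast1 haRle (by positivity) (by linarith)
  have hradZn : rad Z ≤ n * b' := by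
    have h1 : rad Z = rad (n^n * b'^(n-1)) := by rw [hZdef]; exact rad_pow _ two_ne_zero
    rw [h1]
    calc rad (n^n * b'^(n-1)) ≤ rad (n^n) * rad (b'^(n-1)) := rad_mul_le _ _
      _ = rad n * rad b' := by rw [rad_pow _ hnne, rad_pow _ hn1ne]
      _ ≤ n * b' := Nat.mul_le_mul (rad_le hnne) (rad_le (by omega))
  have hradZ : ((rad Z : ℕ):ℝ) ≤ (n:ℝ) * (2*B) := by
    calc ((rad Z:ℕ):ℝ) ≤ ((n * b' : ℕ):ℝ) := by exact_mod_cast hradZn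
      _ = (n:ℝ) * ((b':ℕ):ℝ) := by push_cast; ring
      _ ≤ (n:ℝ) * (2*B) := mul_le_mul_of_nonneg_left hbRle (by positivity)
  have hradY : ((rad Y:ℕ):ℝ) * (B*B) ≤ ((Y:ℕ):ℝ) := by
    have hnat : rad Y * (p*q) ≤ Y := rad_mul_pq_le hp hq hY0.ne' hYdvd
    have h0 : (0:ℝ) ≤ ((rad Y:ℕ):ℝ) := by positivity
    have e1 : (B*B) ≤ ((p:ℕ):ℝ)*((q:ℕ):ℝ) := mul_le_mul hpB.le hqB.le hB0.le (by positivity)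
    calc ((rad Y:ℕ):ℝ)*(B*B) ≤ ((rad Y:ℕ):ℝ)*(((p:ℕ):ℝ)*((q:ℕ):ℝ)) :=
        mul_le_mul_of_nonneg_left e1 h0
      _ = (((rad Y * (p*q) : ℕ)):ℝ) := by push_cast; ring
      _ ≤ ((Y:ℕ):ℝ) := by exact_mod_cast hnat
  have hradprod : ((rad (X*Y*Z) : ℕ):ℝ) ≤ ((rad X:ℕ):ℝ) * ((rad Y:ℕ):ℝ) * ((rad Z:ℕ):ℝ) := by
    have h1 : rad (X*Y*Z) ≤ rad X * rad Y * rad Z :=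
      le_trans (rad_mul_le _ _) (Nat.mul_le_mul_right _ (rad_mul_le _ _))
    exact_mod_cast h1
  have hYleM : ((Y:ℕ):ℝ) ≤ ((M:ℕ):ℝ) := by exact_mod_cast hYM
  have h2A0 : (0:ℝ) ≤ 2*A := by linarith
  have h2B0 : (0:ℝ) ≤ 2*B := by linarith
  have hn2A : (0:ℝ) ≤ (n:ℝ)*(2*A) := mul_nonneg (by positivity) h2A0
  have hn2B : (0:ℝ) ≤ (n:ℝ)*(2*B) := mul_nonneg (by positivity) h2B0
  have hR : ((rad (X*Y*Z):ℕ):ℝ) ≤ 4*(n:ℝ)^2*A*((M:ℕ):ℝ)/B := by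
    rw [le_div_iff₀ hB0]
    have step : ((rad (X*Y*Z):ℕ):ℝ) * B * B ≤ (4*(n:ℝ)^2*A*((M:ℕ):ℝ)) * B := by
      have h0Y : (0:ℝ) ≤ ((rad Y:ℕ):ℝ) := by positivity
      calc ((rad (X*Y*Z):ℕ):ℝ) * B * B
          ≤ (((rad X:ℕ):ℝ) * ((rad Y:ℕ):ℝ) * ((rad Z:ℕ):ℝ)) * B * B := by
            exact mul_le_mul_of_nonneg_right (mul_le_mul_of_nonneg_right hradprod hB0.le) hB0.le
        _ = (((rad X:ℕ):ℝ) * ((rad Z:ℕ):ℝ)) * (((rad Y:ℕ):ℝ) * (B*B)) := by ring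
        _ ≤ (((n:ℝ)*(2*A)) * ((n:ℝ)*(2*B))) * ((Y:ℕ):ℝ) := by
            apply mul_le_mul (mul_le_mul hradX hradZ (by positivity) hn2A) hradY
              (mul_nonneg h0Y (mul_nonneg hB0.le hB0.le)) (mul_nonneg hn2A hn2B)
        _ ≤ (((n:ℝ)*(2*A)) * ((n:ℝ)*(2*B))) * ((M:ℕ):ℝ) :=
            mul_le_mul_of_nonneg_left hYleM (mul_nonneg hn2A hn2B)
        _ = (4*(n:ℝ)^2*A*((M:ℕ):ℝ)) * B := by ring
    exact le_of_mul_le_mul_right step hB0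
  -- abc inequality, expanded
  have hMabc : ((M:ℕ):ℝ) ≤ C * (4*(n:ℝ)^2*A*((M:ℕ):ℝ)/B)^(1+ε) := by
    refine le_trans habcM ?_
    exact mul_le_mul_of_nonneg_left (Real.rpow_le_rpow (by positivity) hR (by linarith)) hC.le
  have h4n2' : (0:ℝ) < 4*(n:ℝ)^2 := by
    have h : (0:ℝ) < (n:ℝ) := by linarith
    positivity
  have hAM0 : (0:ℝ) ≤ 4*(n:ℝ)^2*A*((M:ℕ):ℝ) :=
    mul_nonneg (mul_nonneg h4n2'.le hA0.le) hMR0.le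
  have hexpand : (4*(n:ℝ)^2*A*((M:ℕ):ℝ)/B)^(1+ε)
      = (4*(n:ℝ)^2)^(1+ε) * A^(1+ε) * (((M:ℕ):ℝ))^(1+ε) / B^(1+ε) := by
    rw [Real.div_rpow hAM0 hB0.le, Real.mul_rpow (mul_nonneg h4n2'.le hA0.le) hMR0.le,
      Real.mul_rpow h4n2'.le hA0.le]
  have hM1ε : (((M:ℕ):ℝ))^(1+ε) = ((M:ℕ):ℝ) * (((M:ℕ):ℝ))^ε := by
    rw [Real.rpow_add hMR0, Real.rpow_one]
  have h4nb : (4*(n:ℝ)^2)^((1:ℝ)+ε) ≤ (4*(n:ℝ)^2)^(2:ℝ) :=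
    Real.rpow_le_rpow_of_exponent_le h4n2 (by linarith)
  have hBε : (0:ℝ) < B^((1:ℝ)+ε) := Real.rpow_pos_of_pos hB0 _
  have hkey : (1:ℝ) ≤ C * (4*(n:ℝ)^2)^(2:ℝ) * A^((1:ℝ)+ε) * (((M:ℕ):ℝ))^ε / B^((1:ℝ)+ε) := by
    have h5 : ((M:ℕ):ℝ) ≤
        (C * (4*(n:ℝ)^2)^(2:ℝ) * A^((1:ℝ)+ε) * (((M:ℕ):ℝ))^ε / B^((1:ℝ)+ε)) * ((M:ℕ):ℝ) := by
      refine le_trans hMabc ?_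
      rw [hexpand, hM1ε]
      have hnonneg : (0:ℝ) ≤ A^((1:ℝ)+ε) * (((M:ℕ):ℝ) * (((M:ℕ):ℝ))^ε) / B^((1:ℝ)+ε) :=
        div_nonneg (mul_nonneg (Real.rpow_nonneg hA0.le _)
          (mul_nonneg hMR0.le (Real.rpow_nonneg hMR0.le _))) hBε.le
      calc C * ((4*(n:ℝ)^2)^((1:ℝ)+ε) * A^((1:ℝ)+ε) * (((M:ℕ):ℝ) * (((M:ℕ):ℝ))^ε) / B^((1:ℝ)+ε))
          = C * ((4*(n:ℝ)^2)^((1:ℝ)+ε) *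
              (A^((1:ℝ)+ε) * (((M:ℕ):ℝ) * (((M:ℕ):ℝ))^ε) / B^((1:ℝ)+ε))) := by ring
        _ ≤ C * ((4*(n:ℝ)^2)^(2:ℝ) *
              (A^((1:ℝ)+ε) * (((M:ℕ):ℝ) * (((M:ℕ):ℝ))^ε) / B^((1:ℝ)+ε))) := by
            exact mul_le_mul_of_nonneg_left (mul_le_mul_of_nonneg_right h4nb hnonneg) hC.le
        _ = (C * (4*(n:ℝ)^2)^(2:ℝ) * A^((1:ℝ)+ε) * (((M:ℕ):ℝ))^ε / B^((1:ℝ)+ε)) * ((M:ℕ):ℝ) := by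
            ring
    exact (le_mul_iff_one_le_left hMR0).mp h5
  -- numeric exponent facts
  obtain ⟨hf1, hf2, hf3, hf4⟩ := exponent_facts (n:ℝ) δ₀ ε hn5 hδ hε hεn
  have hfac : (0:ℝ) ≤ C * (4*(n:ℝ)^2)^(2:ℝ) * A^((1:ℝ)+ε) / B^((1:ℝ)+ε) :=
    div_nonneg (mul_nonneg (mul_nonneg hC.le (Real.rpow_nonneg h4n2'.le _))
      (Real.rpow_nonneg hA0.le _)) hBε.le
  have hK0 : (0:ℝ) ≤ 2*K := by linarith
  have hfin : (1:ℝ) ≤ C₄ * A^(-(δ₀/2)) := by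
    rcases le_total ((A^n)^2) ((B^(n-1))^2) with hc | hc
    · -- B-dominant
      have hM2 : ((M:ℕ):ℝ) ≤ 2*K*(B^(n-1))^2 := by
        have := mul_le_mul_of_nonneg_left hc (by linarith : (0:ℝ) ≤ K)
        linarith
      have hMε : (((M:ℕ):ℝ))^ε ≤ (2*K) * ((B^(n-1))^2 : ℝ)^ε := by
        calc (((M:ℕ):ℝ))^ε ≤ (2*K*(B^(n-1))^2)^ε := Real.rpow_le_rpow hMR0.le hM2 hε.le
          _ = (2*K)^ε * ((B^(n-1))^2 : ℝ)^ε := Real.mul_rpow hK0 (by positivity)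
          _ ≤ (2*K) * ((B^(n-1))^2 : ℝ)^ε := by
              refine mul_le_mul_of_nonneg_right ?_ (Real.rpow_nonneg (by positivity) _)
              calc (2*K)^ε ≤ (2*K)^(1:ℝ) :=
                    Real.rpow_le_rpow_of_exponent_le (by linarith) hε1
                _ = 2*K := Real.rpow_one _
      have hkey2 : (1:ℝ) ≤ C₄ * A^((1:ℝ)+ε) * ((B^(n-1))^2 : ℝ)^ε / B^((1:ℝ)+ε) := by
        refine le_trans hkey ?_
        calc C * (4*(n:ℝ)^2)^(2:ℝ) * A^((1:ℝ)+ε) * (((M:ℕ):ℝ))^ε / B^((1:ℝ)+ε)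
            = (C * (4*(n:ℝ)^2)^(2:ℝ) * A^((1:ℝ)+ε) / B^((1:ℝ)+ε)) * (((M:ℕ):ℝ))^ε := by ring
          _ ≤ (C * (4*(n:ℝ)^2)^(2:ℝ) * A^((1:ℝ)+ε) / B^((1:ℝ)+ε)) *
                ((2*K) * ((B^(n-1))^2 : ℝ)^ε) := mul_le_mul_of_nonneg_left hMε hfac
          _ = C₄ * A^((1:ℝ)+ε) * ((B^(n-1))^2 : ℝ)^ε / B^((1:ℝ)+ε) := by rw [hC₄def]; ring
      set cB : ℝ := (((n-1)*2 : ℕ) : ℝ) with hcBdef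
      have hcB : cB = 2*(n:ℝ) - 2 := by
        rw [hcBdef]; push_cast [Nat.cast_sub hn1n]; ring
      have e1 : ((B^(n-1))^2 : ℝ) = B ^ cB := by
        rw [← pow_mul]; exact (Real.rpow_natCast B ((n-1)*2)).symm
      have e2 : ((B^(n-1))^2 : ℝ)^ε = B ^ (cB*ε) := by
        rw [e1, ← Real.rpow_mul hB0.le]
      have hneg : cB*ε - (1+ε) ≤ 0 := by rw [hcB]; exact hf2
      have hkey3 : (1:ℝ) ≤ C₄ * A^((1:ℝ)+ε) * B ^ (cB*ε - (1+ε)) := by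
        refine le_trans hkey2 (le_of_eq ?_)
        rw [Real.rpow_sub hB0, e2]; ring
      have hBstep : B ^ (cB*ε - (1+ε)) ≤ (A^(1+δ₀)) ^ (cB*ε - (1+ε)) :=
        Real.rpow_le_rpow_of_nonpos (Real.rpow_pos_of_pos hA0 _) hAB.le hneg
      have hkey4 : (1:ℝ) ≤ C₄ * A^((1:ℝ)+ε) * A ^ ((1+δ₀)*(cB*ε - (1+ε))) := by
        rw [Real.rpow_mul hA0.le]
        refine le_trans hkey3 ?_
        exact mul_le_mul_of_nonneg_left hBstep
          (mul_nonneg hC₄.le (Real.rpow_nonneg hA0.le _))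
      have hexp2 : ((1:ℝ)+ε) + (1+δ₀)*(cB*ε - (1+ε)) ≤ -(δ₀/2) := by
        rw [hcB]; exact hf3
      calc (1:ℝ) ≤ C₄ * A^((1:ℝ)+ε) * A ^ ((1+δ₀)*(cB*ε - (1+ε))) := hkey4
        _ = C₄ * A ^ (((1:ℝ)+ε) + (1+δ₀)*(cB*ε - (1+ε))) := by
            rw [Real.rpow_add hA0 ((1:ℝ)+ε) ((1+δ₀)*(cB*ε - (1+ε)))]; ring
        _ ≤ C₄ * A^(-(δ₀/2)) :=
            mul_le_mul_of_nonneg_left (Real.rpow_le_rpow_of_exponent_le hA1 hexp2) hC₄.le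
    · -- A-dominant
      have hM2 : ((M:ℕ):ℝ) ≤ 2*K*(A^n)^2 := by
        have := mul_le_mul_of_nonneg_left hc (by linarith : (0:ℝ) ≤ K)
        linarith
      have hMε : (((M:ℕ):ℝ))^ε ≤ (2*K) * ((A^n)^2 : ℝ)^ε := by
        calc (((M:ℕ):ℝ))^ε ≤ (2*K*(A^n)^2)^ε := Real.rpow_le_rpow hMR0.le hM2 hε.le
          _ = (2*K)^ε * ((A^n)^2 : ℝ)^ε := Real.mul_rpow hK0 (by positivity)
          _ ≤ (2*K) * ((A^n)^2 : ℝ)^ε := by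
              refine mul_le_mul_of_nonneg_right ?_ (Real.rpow_nonneg (by positivity) _)
              calc (2*K)^ε ≤ (2*K)^(1:ℝ) :=
                    Real.rpow_le_rpow_of_exponent_le (by linarith) hε1
                _ = 2*K := Real.rpow_one _
      have hkey2 : (1:ℝ) ≤ C₄ * A^((1:ℝ)+ε) * ((A^n)^2 : ℝ)^ε / B^((1:ℝ)+ε) := by
        refine le_trans hkey ?_
        calc C * (4*(n:ℝ)^2)^(2:ℝ) * A^((1:ℝ)+ε) * (((M:ℕ):ℝ))^ε / B^((1:ℝ)+ε)
            = (C * (4*(n:ℝ)^2)^(2:ℝ) * A^((1:ℝ)+ε) / B^((1:ℝ)+ε)) * (((M:ℕ):ℝ))^ε := by ring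
          _ ≤ (C * (4*(n:ℝ)^2)^(2:ℝ) * A^((1:ℝ)+ε) / B^((1:ℝ)+ε)) *
                ((2*K) * ((A^n)^2 : ℝ)^ε) := mul_le_mul_of_nonneg_left hMε hfac
          _ = C₄ * A^((1:ℝ)+ε) * ((A^n)^2 : ℝ)^ε / B^((1:ℝ)+ε) := by rw [hC₄def]; ring
      set cA : ℝ := ((n*2 : ℕ) : ℝ) with hcAdef
      have hcA : cA = 2*(n:ℝ) := by rw [hcAdef]; push_cast; ring
      have e1 : ((A^n)^2 : ℝ) = A ^ cA := by
        rw [← pow_mul]; exact (Real.rpow_natCast A (n*2)).symm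
      have e2 : ((A^n)^2 : ℝ)^ε = A ^ (cA*ε) := by
        rw [e1, ← Real.rpow_mul hA0.le]
      have hBrpow : A^((1+δ₀)*((1:ℝ)+ε)) ≤ B^((1:ℝ)+ε) := by
        rw [Real.rpow_mul hA0.le]
        exact Real.rpow_le_rpow (Real.rpow_nonneg hA0.le _) hAB.le (by linarith)
      have hkey3 : (1:ℝ) ≤ C₄ * A ^ (((1:ℝ)+ε) + cA*ε) / A^((1+δ₀)*((1:ℝ)+ε)) := by
        refine le_trans hkey2 ?_
        have hnum : (0:ℝ) ≤ C₄ * A ^ (((1:ℝ)+ε) + cA*ε) :=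
          mul_nonneg hC₄.le (Real.rpow_nonneg hA0.le _)
        have hstep : C₄ * A^((1:ℝ)+ε) * ((A^n)^2 : ℝ)^ε / B^((1:ℝ)+ε)
            = (C₄ * A ^ (((1:ℝ)+ε) + cA*ε)) / B^((1:ℝ)+ε) := by
          rw [e2, Real.rpow_add hA0 ((1:ℝ)+ε) (cA*ε)]; ring
        rw [hstep]
        exact div_le_div_of_nonneg_left hnum (Real.rpow_pos_of_pos hA0 _) hBrpow
      have hexp2 : (((1:ℝ)+ε) + cA*ε) - (1+δ₀)*((1:ℝ)+ε) ≤ -(δ₀/2) := by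
        rw [hcA]
        have := hf4
        linarith
      calc (1:ℝ) ≤ C₄ * A ^ (((1:ℝ)+ε) + cA*ε) / A^((1+δ₀)*((1:ℝ)+ε)) := hkey3
        _ = C₄ * A ^ ((((1:ℝ)+ε) + cA*ε) - (1+δ₀)*((1:ℝ)+ε)) := by
            rw [Real.rpow_sub hA0 (((1:ℝ)+ε) + cA*ε) ((1+δ₀)*((1:ℝ)+ε))]; ring
        _ ≤ C₄ * A^(-(δ₀/2)) :=
            mul_le_mul_of_nonneg_left (Real.rpow_le_rpow_of_exponent_le hA1 hexp2) hC₄.le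
  -- final contradiction
  have h6 : A^(δ₀/2) ≤ C₄ := by
    have hpos : (0:ℝ) < A^(δ₀/2) := Real.rpow_pos_of_pos hA0 _
    have h7 := mul_le_mul_of_nonneg_right hfin hpos.le
    rw [one_mul, mul_assoc, ← Real.rpow_add hA0] at h7
    norm_num at h7
    exact h7
  have h8 : (2*C₄+1) ≤ A^(δ₀/2) := by
    have h9 : ((2*C₄+1) ^ (2/δ₀) : ℝ) ≤ A := by linarith
    have h10 : (((2*C₄+1) ^ (2/δ₀) : ℝ))^(δ₀/2) ≤ A^(δ₀/2) :=
      Real.rpow_le_rpow (Real.rpow_nonneg (by linarith) _) h9 (by positivity)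
    rw [← Real.rpow_mul (by linarith : (0:ℝ) ≤ 2*C₄+1)] at h10
    have he : (2/δ₀)*(δ₀/2) = 1 := by field_simp
    rwa [he, Real.rpow_one] at h10
  linarith
end
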